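/- Let (m₁,m₂,m₃,ξ,p) be a collision solution of the reduced two-body system on [t₀, t*), i.e. ξ(t) → +∞ as t → t*⁻. Then the growth of |p| does not exceed that of √ξ: there exist M > 0 and t₁ ∈ [t₀, t*) such that |p(t)| ≤ M·√(ξ(t)) for all t ∈ [t₁, t*). -/

import Mathlib

open Filter Set

/-- The filter of approach `t → t*⁻`, where `t* ∈ ℝ ∪ {±∞}` is encoded as an `EReal`:
for finite `t*` this is `𝓝[<] t*`, and for `t* = ⊤` it is `atTop`. -/
noncomputable def approachFilter (tstar : EReal) : Filter ℝ :=
  Filter.comap (fun t : ℝ => (t : EReal)) (nhdsWithin tstar (Set.Iio tstar))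


private lemma casimir_deriv_aux {m1 m2 m3 xi p : ℝ → ℝ} {t : ℝ}
    (h1 : HasDerivAt m1 (xi t * (-(m2 t)^2 + (m3 t)^2 + 2 * m2 t * m3 t * xi t)) t)
    (h2 : HasDerivAt m2 (m1 t * m2 t * xi t - m3 t * p t - 2 * m1 t * m3 t * (xi t)^2) t)
    (h3 : HasDerivAt m3 (m2 t * p t - m1 t * m3 t * xi t) t) :
    HasDerivAt (fun t => m1 t ^ 2 + m2 t ^ 2 + m3 t ^ 2) 0 t := by
  have h : HasDerivAt (fun t => m1 t ^ 2 + m2 t ^ 2 + m3 t ^ 2) _ t :=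
    ((h1.pow 2).add (h2.pow 2)).add (h3.pow 2)
  convert h using 1
  push_cast
  ring

private lemma energy_deriv_aux {m1 m2 m3 xi p : ℝ → ℝ} {t : ℝ}
    (h1 : HasDerivAt m1 (xi t * (-(m2 t)^2 + (m3 t)^2 + 2 * m2 t * m3 t * xi t)) t)
    (h2 : HasDerivAt m2 (m1 t * m2 t * xi t - m3 t * p t - 2 * m1 t * m3 t * (xi t)^2) t)
    (h3 : HasDerivAt m3 (m2 t * p t - m1 t * m3 t * xi t) t)
    (h4 : HasDerivAt xi (-((xi t)^2 + 1) * (2 * p t - m1 t)) t)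
    (h5 : HasDerivAt p (-((xi t)^2 + 1) * (1 + m2 t * m3 t - 2 * (m3 t)^2 * xi t)) t) :
    HasDerivAt (fun t => p t ^ 2 - p t * m1 t - xi t - m2 t * m3 t * xi t
      + m3 t ^ 2 * xi t ^ 2) 0 t := by
  have h : HasDerivAt (fun t => p t ^ 2 - p t * m1 t - xi t - m2 t * m3 t * xi t
      + m3 t ^ 2 * xi t ^ 2) _ t := (((((h5.pow 2).sub (h5.mul h1)).sub h4).sub
      ((h2.mul h3).mul h4)).add ((h3.pow 2).mul (h4.pow 2)))
  convert h using 1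
  push_cast [Pi.mul_apply, Pi.pow_apply]
  ring

private lemma quad_bound_aux {q B D s : ℝ} (hq0 : 0 ≤ q) (hB0 : 0 ≤ B) (hD0 : 0 ≤ D)
    (hs1 : 1 ≤ s) (hq2 : q ^ 2 ≤ q * B + D ^ 2 * s ^ 2) : q ≤ (2 * B + D + 1) * s := by
  have hs0 : (0 : ℝ) ≤ s := by linarith
  have h3 : (q - B) ^ 2 ≤ (D * s + B) ^ 2 := by
    nlinarith [mul_nonneg hq0 hB0, mul_nonneg (mul_nonneg hD0 hs0) hB0]
  have h4 : q - B ≤ D * s + B := by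
    calc q - B ≤ |q - B| := le_abs_self _
    _ = Real.sqrt ((q - B) ^ 2) := (Real.sqrt_sq_eq_abs _).symm
    _ ≤ Real.sqrt ((D * s + B) ^ 2) := Real.sqrt_le_sqrt h3
    _ = |D * s + B| := Real.sqrt_sq_eq_abs _
    _ = D * s + B := abs_of_nonneg (by positivity)
  have hBs : B ≤ B * s := le_mul_of_one_le_right hB0 hs1
  nlinarith

/-- Along a collision solution of the reduced two-body system (`ξ(t) → +∞` as `t → t*⁻`),
the growth of `|p|` does not exceed that of `√ξ`: there are `M > 0` and `t₁ ∈ [t₀, t*)` with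
`|p(t)| ≤ M·√(ξ(t))` for all `t ∈ [t₁, t*)`. -/
theorem p_le_sqrt_xi_at_collision
    (t0 : ℝ) (tstar : EReal) (ht0 : (t0 : EReal) < tstar)
    (m1 m2 m3 xi p : ℝ → ℝ)
    (hm1 : ∀ t : ℝ, t0 ≤ t → (t : EReal) < tstar →
      HasDerivAt m1 (xi t * (-(m2 t)^2 + (m3 t)^2 + 2 * m2 t * m3 t * xi t)) t)
    (hm2 : ∀ t : ℝ, t0 ≤ t → (t : EReal) < tstar →
      HasDerivAt m2 (m1 t * m2 t * xi t - m3 t * p t - 2 * m1 t * m3 t * (xi t)^2) t)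
    (hm3 : ∀ t : ℝ, t0 ≤ t → (t : EReal) < tstar →
      HasDerivAt m3 (m2 t * p t - m1 t * m3 t * xi t) t)
    (hxi : ∀ t : ℝ, t0 ≤ t → (t : EReal) < tstar →
      HasDerivAt xi (-((xi t)^2 + 1) * (2 * p t - m1 t)) t)
    (hp : ∀ t : ℝ, t0 ≤ t → (t : EReal) < tstar →
      HasDerivAt p (-((xi t)^2 + 1) * (1 + m2 t * m3 t - 2 * (m3 t)^2 * xi t)) t)
    (hcoll : Tendsto xi (approachFilter tstar) atTop) :
    ∃ M > (0 : ℝ), ∃ t1 : ℝ, (t0 ≤ t1 ∧ (t1 : EReal) < tstar) ∧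
      ∀ t : ℝ, t1 ≤ t → (t : EReal) < tstar → |p t| ≤ M * Real.sqrt (xi t) := by
  classical
  -- Step 1: a tail interval on which `xi ≥ 1`.
  have hev : ∀ᶠ x in nhdsWithin tstar (Set.Iio tstar), ∀ t : ℝ, (t : EReal) = x → 1 ≤ xi t := by
    have h := hcoll.eventually (eventually_ge_atTop (1 : ℝ))
    rw [approachFilter] at h
    exact eventually_comap.mp h
  obtain ⟨l, hl_lt, hsub⟩ := (mem_nhdsLT_iff_exists_Ioo_subset' ht0).mp hev
  have hmax : max l (t0 : EReal) < tstar := max_lt hl_lt ht0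
  obtain ⟨t1, h1a, h1b⟩ := EReal.lt_iff_exists_real_btwn.mp hmax
  have ht01 : t0 ≤ t1 := by
    have : (t0 : EReal) < (t1 : EReal) := lt_of_le_of_lt (le_max_right _ _) h1a
    exact (EReal.coe_lt_coe_iff.mp this).le
  have hlt1 : l < (t1 : EReal) := lt_of_le_of_lt (le_max_left _ _) h1a
  have hxi1 : ∀ t : ℝ, t1 ≤ t → (t : EReal) < tstar → 1 ≤ xi t := by
    intro t ht htt
    have hmem : (t : EReal) ∈ Set.Ioo l tstar :=
      ⟨lt_of_lt_of_le hlt1 (EReal.coe_le_coe_iff.mpr ht), htt⟩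
    exact hsub hmem t rfl
  -- Step 2: constancy machinery.
  have const_fun : ∀ f : ℝ → ℝ,
      (∀ t : ℝ, t0 ≤ t → (t : EReal) < tstar → HasDerivAt f 0 t) →
      ∀ t : ℝ, t1 ≤ t → (t : EReal) < tstar → f t = f t1 := by
    intro f hf t ht htt
    have hmemI : ∀ x ∈ Set.Icc t1 t, t0 ≤ x ∧ (x : EReal) < tstar := by
      intro x hx
      exact ⟨le_trans ht01 hx.1, lt_of_le_of_lt (EReal.coe_le_coe_iff.mpr hx.2) htt⟩
    have hcont : ContinuousOn f (Set.Icc t1 t) := by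
      intro x hx
      obtain ⟨hx1, hx2⟩ := hmemI x hx
      exact ((hf x hx1 hx2).continuousAt).continuousWithinAt
    have hderiv : ∀ x ∈ Set.Ico t1 t, HasDerivWithinAt f 0 (Set.Ici x) x := by
      intro x hx
      obtain ⟨hx1, hx2⟩ := hmemI x ⟨hx.1, hx.2.le⟩
      exact (hf x hx1 hx2).hasDerivWithinAt
    exact constant_of_has_deriv_right_zero hcont hderiv t (Set.right_mem_Icc.mpr ht)
  -- Conserved quantity 1: Casimir `m1² + m2² + m3²`.
  have hCd : ∀ t : ℝ, t0 ≤ t → (t : EReal) < tstar →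
      HasDerivAt (fun t => m1 t ^ 2 + m2 t ^ 2 + m3 t ^ 2) 0 t := by
    intro t ht htt
    exact casimir_deriv_aux (hm1 t ht htt) (hm2 t ht htt) (hm3 t ht htt)
  -- Conserved quantity 2: energy `p² - p m1 - ξ - m2 m3 ξ + m3² ξ²`.
  have hEd : ∀ t : ℝ, t0 ≤ t → (t : EReal) < tstar →
      HasDerivAt (fun t => p t ^ 2 - p t * m1 t - xi t - m2 t * m3 t * xi t
        + m3 t ^ 2 * xi t ^ 2) 0 t := by
    intro t ht htt
    exact energy_deriv_aux (hm1 t ht htt) (hm2 t ht htt) (hm3 t ht htt)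
      (hxi t ht htt) (hp t ht htt)
  set c : ℝ := m1 t1 ^ 2 + m2 t1 ^ 2 + m3 t1 ^ 2 with hc_def
  set e : ℝ := p t1 ^ 2 - p t1 * m1 t1 - xi t1 - m2 t1 * m3 t1 * xi t1
      + m3 t1 ^ 2 * xi t1 ^ 2 with he_def
  have hc0 : 0 ≤ c := by rw [hc_def]; positivity
  clear_value c e
  set B : ℝ := Real.sqrt c with hB_def
  set D : ℝ := Real.sqrt (|e| + 1 + c) with hD_def
  have hB0 : 0 ≤ B := Real.sqrt_nonneg _
  have hD0 : 0 ≤ D := Real.sqrt_nonneg _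
  have hB2 : B ^ 2 = c := Real.sq_sqrt hc0
  have hD2 : D ^ 2 = |e| + 1 + c := Real.sq_sqrt (by positivity)
  clear_value B D
  refine ⟨2 * B + D + 1, by linarith, t1, ⟨ht01, h1b⟩, ?_⟩
  intro t ht htt
  have hC : m1 t ^ 2 + m2 t ^ 2 + m3 t ^ 2 = c := by
    rw [hc_def]; exact const_fun _ hCd t ht htt
  have hE : p t ^ 2 - p t * m1 t - xi t - m2 t * m3 t * xi t + m3 t ^ 2 * xi t ^ 2 = e := by
    rw [he_def]; exact const_fun _ hEd t ht htt
  have hx1 : 1 ≤ xi t := hxi1 t ht htt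
  have hx0 : 0 ≤ xi t := by linarith
  set s : ℝ := Real.sqrt (xi t) with hs_def
  have hs2 : s ^ 2 = xi t := Real.sq_sqrt hx0
  have hs1 : 1 ≤ s := by
    rw [hs_def]
    exact Real.one_le_sqrt.mpr hx1
  have hs0 : 0 ≤ s := by linarith
  clear_value s
  -- |m1 t| ≤ B
  have hm1B : |m1 t| ≤ B := by
    rw [hB_def, ← Real.sqrt_sq_eq_abs]
    exact Real.sqrt_le_sqrt (by nlinarith [sq_nonneg (m2 t), sq_nonneg (m3 t)])
  have hpm1 : p t * m1 t ≤ |p t| * B := by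
    calc p t * m1 t ≤ |p t * m1 t| := le_abs_self _
    _ = |p t| * |m1 t| := abs_mul _ _
    _ ≤ |p t| * B := mul_le_mul_of_nonneg_left hm1B (abs_nonneg _)
  have hm23 : m2 t * m3 t * xi t ≤ c * xi t := by
    have h1 : m2 t * m3 t ≤ c := by nlinarith [sq_nonneg (m2 t - m3 t), sq_nonneg (m1 t)]
    exact mul_le_mul_of_nonneg_right h1 hx0
  have heabs : e ≤ |e| := le_abs_self e
  have heabs2 : |e| ≤ |e| * xi t := le_mul_of_one_le_right (abs_nonneg e) hx1
  have hkey : p t ^ 2 ≤ |p t| * B + D ^ 2 * s ^ 2 := by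
    rw [hD2, hs2]
    linarith [hE, hpm1, hm23, heabs, heabs2, sq_nonneg (m3 t * xi t)]
  -- From q² ≤ qB + D²s², q ≥ 0 derive q ≤ (2B + D + 1) s.
  have hq2 : |p t| ^ 2 ≤ |p t| * B + D ^ 2 * s ^ 2 := by rwa [sq_abs]
  exact quad_bound_aux (abs_nonneg _) hB0 hD0 hs1 hq2
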